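/- Let $k$ be a field and let $\varphi$ be a homogeneous polynomial of degree $3$ in $N+1$ variables over $k$. If $\varphi$ is isotropic over some field extension $K/k$ with $[K:k]=2$, then $\varphi$ is already isotropic over $k$. -/

import Mathlib

open Polynomial MvPolynomial

-- coefficient of a product at the sum of degree bounds
lemma aux_coeff_prod {k : Type} [CommRing k] {ι : Type} [DecidableEq ι] (s : Finset ι)
    (p : ι → Polynomial k) (d : ι → ℕ) (h : ∀ i ∈ s, (p i).natDegree ≤ d i) :
    (∏ i ∈ s, p i).coeff (∑ i ∈ s, d i) = ∏ i ∈ s, (p i).coeff (d i) := by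
  induction s using Finset.induction with
  | empty => simp
  | insert _ _ hx ih =>
      rename_i a s
      rw [Finset.prod_insert hx, Finset.prod_insert hx, Finset.sum_insert hx,
        Polynomial.coeff_mul_add_eq_of_natDegree_le (h a (Finset.mem_insert_self a s))
          (le_trans (Polynomial.natDegree_prod_le _ _)
            (Finset.sum_le_sum (fun i hi => h i (Finset.mem_insert_of_mem hi)))),
        ih (fun i hi => h i (Finset.mem_insert_of_mem hi))]

-- homogeneous polys have ∑ over univ of exponents = n on support
lemma aux_support_sum {k : Type} [CommRing k] {m n : ℕ} {φ : MvPolynomial (Fin m) k}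
    (hφ : φ.IsHomogeneous n) {d : Fin m →₀ ℕ} (hd : d ∈ φ.support) :
    ∑ i, d i = n := by
  have := hφ (MvPolynomial.mem_support_iff.mp hd)
  rw [← this, Finsupp.weight_apply, Finsupp.sum_fintype]
  · simp
  · simp

lemma aux_eval_smul {k : Type} [CommRing k] {m n : ℕ} {φ : MvPolynomial (Fin m) k}
    (hφ : φ.IsHomogeneous n) (c : k) (x : Fin m → k) :
    MvPolynomial.eval (fun i => c * x i) φ = c ^ n * MvPolynomial.eval x φ := by
  rw [MvPolynomial.eval_eq', MvPolynomial.eval_eq', Finset.mul_sum]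
  apply Finset.sum_congr rfl
  intro d hd
  simp only [mul_pow]
  rw [Finset.prod_mul_distrib, Finset.prod_pow_eq_pow_sum]
  rw [aux_support_sum hφ hd]
  ring

section line
variable {k : Type} [Field k] {m n : ℕ} {φ : MvPolynomial (Fin m) k} (u v : Fin m → k)

noncomputable def lineRestrict (u v : Fin m → k) (φ : MvPolynomial (Fin m) k) : Polynomial k :=
  MvPolynomial.aeval (fun i => Polynomial.C (u i) + Polynomial.C (v i) * Polynomial.X) φ

lemma lineRestrict_eq (φ : MvPolynomial (Fin m) k) :
    lineRestrict u v φ = ∑ d ∈ φ.support,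
      Polynomial.C (φ.coeff d) * ∏ i, (Polynomial.C (u i) + Polynomial.C (v i) * Polynomial.X) ^ d i := by
  rw [lineRestrict, MvPolynomial.aeval_def, MvPolynomial.eval₂_eq']
  simp [Polynomial.algebraMap_eq]

lemma lineRestrict_natDegree_le (hφ : φ.IsHomogeneous n) :
    (lineRestrict u v φ).natDegree ≤ n := by
  rw [lineRestrict_eq]
  apply Polynomial.natDegree_sum_le_of_forall_le
  intro d hd
  refine le_trans (Polynomial.natDegree_mul_le) ?_
  rw [Polynomial.natDegree_C, zero_add]
  refine le_trans (Polynomial.natDegree_prod_le _ _) ?_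
  rw [← aux_support_sum hφ hd]
  apply Finset.sum_le_sum
  intro i _
  refine le_trans Polynomial.natDegree_pow_le ?_
  have : (Polynomial.C (u i) + Polynomial.C (v i) * Polynomial.X).natDegree ≤ 1 := by
    compute_degree
  simpa using Nat.mul_le_mul_left (d i) this

lemma lineRestrict_coeff (hφ : φ.IsHomogeneous n) :
    (lineRestrict u v φ).coeff n = MvPolynomial.eval v φ := by
  rw [lineRestrict_eq, Polynomial.finset_sum_coeff, MvPolynomial.eval_eq']
  apply Finset.sum_congr rfl
  intro d hd
  rw [Polynomial.coeff_C_mul, ← aux_support_sum hφ hd,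
    aux_coeff_prod _ _ (fun i => d i) ?_]
  · congr 1
    apply Finset.prod_congr rfl
    intro i _
    have h1 : (Polynomial.C (u i) + Polynomial.C (v i) * Polynomial.X).natDegree ≤ 1 := by
      compute_degree
    have := Polynomial.coeff_pow_of_natDegree_le (m := d i) h1
    rw [mul_one] at this
    rw [this]
    simp
  · intro i _
    refine le_trans Polynomial.natDegree_pow_le ?_
    have : (Polynomial.C (u i) + Polynomial.C (v i) * Polynomial.X).natDegree ≤ 1 := by
      compute_degree
    simpa using Nat.mul_le_mul_left (d i) this

lemma lineRestrict_eval (φ : MvPolynomial (Fin m) k) (t : k) :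
    (lineRestrict u v φ).eval t = MvPolynomial.eval (fun i => u i + t * v i) φ := by
  have h := MvPolynomial.comp_aeval_apply (R := k)
    (Polynomial.aeval t : Polynomial k →ₐ[k] k)
    (f := fun i => Polynomial.C (u i) + Polynomial.C (v i) * Polynomial.X) (p := φ)
  rw [← Polynomial.coe_aeval_eq_eval]
  rw [lineRestrict]
  rw [h]
  have : ∀ i, (Polynomial.aeval t) (Polynomial.C (u i) + Polynomial.C (v i) * Polynomial.X)
      = u i + t * v i := by
    intro i
    simp only [map_add, map_mul, Polynomial.aeval_C, Polynomial.aeval_X, Algebra.algebraMap_self,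
      RingHom.id_apply]
    ring
  simp only [this]
  rw [← MvPolynomial.coe_aeval_eq_eval]
  rfl

lemma lineRestrict_aeval (φ : MvPolynomial (Fin m) k) {K : Type} [CommRing K] [Algebra k K]
    (θ : K) :
    Polynomial.aeval θ (lineRestrict u v φ) =
      MvPolynomial.aeval (fun i => algebraMap k K (u i) + algebraMap k K (v i) * θ) φ := by
  have h := MvPolynomial.comp_aeval_apply (R := k)
    (Polynomial.aeval θ : Polynomial k →ₐ[k] K)
    (f := fun i => Polynomial.C (u i) + Polynomial.C (v i) * Polynomial.X) (p := φ)
  simpa [lineRestrict] using h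

lemma aeval_eq_eval_map (φ : MvPolynomial (Fin m) k) {K : Type} [CommRing K] [Algebra k K]
    (g : Fin m → K) :
    MvPolynomial.aeval g φ = MvPolynomial.eval g (MvPolynomial.map (algebraMap k K) φ) := by
  rw [MvPolynomial.eval_map, MvPolynomial.aeval_def]

lemma algebraMap_eval (φ : MvPolynomial (Fin m) k) {K : Type} [CommRing K] [Algebra k K]
    (x : Fin m → k) :
    algebraMap k K (MvPolynomial.eval x φ) =
      MvPolynomial.eval (fun i => algebraMap k K (x i)) (MvPolynomial.map (algebraMap k K) φ) := by
  rw [← aeval_eq_eval_map]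
  have h := MvPolynomial.comp_aeval_apply (R := k) (Algebra.ofId k K) (f := x) (p := φ)
  rw [show ((MvPolynomial.eval x) φ) = MvPolynomial.aeval x φ from by
    rw [← MvPolynomial.coe_aeval_eq_eval]; rfl]
  simpa [Algebra.ofId_apply] using h

end line

/-- **Corollary (cubic forms and quadratic extensions).** Let `k` be a field and `φ` a
cubic form in `N+1` variables over `k`. If `φ` is isotropic over some quadratic extension
`K/k`, then `φ` is already isotropic over `k`. -/
theorem cubic_quadratic_descent (k : Type) [Field k] (N : ℕ)
    (φ : MvPolynomial (Fin (N + 1)) k) (hφ : φ.IsHomogeneous 3)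
    (K : Type) [Field K] [Algebra k K] (hK : Module.finrank k K = 2)
    (hiso : ∃ w : Fin (N + 1) → K, w ≠ 0 ∧
      MvPolynomial.eval w (MvPolynomial.map (algebraMap k K) φ) = 0) :
    ∃ v : Fin (N + 1) → k, v ≠ 0 ∧ MvPolynomial.eval v φ = 0 := by
  obtain ⟨w, hw0, hweval⟩ := hiso
  haveI : Module.Finite k K := Module.finite_of_finrank_eq_succ (n := 1) (by rw [hK])
  have hinj : Function.Injective (algebraMap k K) := (algebraMap k K).injective
  have hbotne : (⊥ : Subalgebra k K) ≠ ⊤ := by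
    intro h
    rw [Subalgebra.bot_eq_top_iff_finrank_eq_one] at h
    omega
  obtain ⟨θ, hθ⟩ : ∃ θ : K, θ ∉ (⊥ : Subalgebra k K) := by
    by_contra h
    push_neg at h
    apply hbotne
    rw [eq_top_iff]
    intro x _
    exact h x
  have hθrange : θ ∉ Set.range (algebraMap k K) := by
    rw [Algebra.mem_bot] at hθ
    exact hθ
  have hθne : ∀ c : k, θ ≠ algebraMap k K c := fun c h => hθrange ⟨c, h.symm⟩
  have li : LinearIndependent k ![(1 : K), θ] := by
    rw [LinearIndependent.pair_iff]
    intro s t hst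
    by_cases ht : t = 0
    · subst ht
      constructor
      · apply hinj
        rw [map_zero]
        simpa [Algebra.smul_def] using hst
      · rfl
    · exfalso
      apply hθne (-(s / t))
      rw [Algebra.smul_def, mul_one, Algebra.smul_def] at hst
      have htK : algebraMap k K t ≠ 0 := fun h => ht (hinj (by rw [h, map_zero]))
      rw [map_neg, map_div₀]
      field_simp
      linear_combination hst
  let B := basisOfLinearIndependentOfCardEqFinrank li (by simp [hK])
  have hB : ∀ i, B i = ![(1:K), θ] i := fun i => by
    rw [coe_basisOfLinearIndependentOfCardEqFinrank]
  set u : Fin (N+1) → k := fun i => B.repr (w i) 0 with hu_def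
  set v : Fin (N+1) → k := fun i => B.repr (w i) 1 with hv_def
  have hw : ∀ i, w i = algebraMap k K (u i) + algebraMap k K (v i) * θ := by
    intro i
    have hs := B.sum_repr (w i)
    rw [Fin.sum_univ_two, hB 0, hB 1] at hs
    rw [← hs]
    simp [Algebra.smul_def]
    rfl
  -- scaling helper
  have hsc : ∀ (c : K) (x : Fin (N+1) → k), c ≠ 0 → (∀ i, w i = c * algebraMap k K (x i)) →
      ∃ v : Fin (N + 1) → k, v ≠ 0 ∧ MvPolynomial.eval v φ = 0 := by
    intro c x hc hwx
    have hx0 : x ≠ 0 := by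
      rintro rfl
      apply hw0
      funext i
      simp [hwx i]
    refine ⟨x, hx0, ?_⟩
    have h1 : MvPolynomial.eval w (MvPolynomial.map (algebraMap k K) φ)
        = c ^ 3 * algebraMap k K (MvPolynomial.eval x φ) := by
      rw [show w = (fun i => c * (algebraMap k K (x i))) from funext hwx]
      rw [aux_eval_smul (hφ.map (algebraMap k K)) c, ← algebraMap_eval]
    rw [hweval] at h1
    rcases mul_eq_zero.mp h1.symm with h | h
    · exact absurd h (pow_ne_zero _ hc)
    · exact hinj (by rw [h, map_zero])
  set f := lineRestrict u v φ with hf_def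
  have hfθ : Polynomial.aeval θ f = 0 := by
    rw [hf_def, lineRestrict_aeval, aeval_eq_eval_map]
    rw [show (fun i => algebraMap k K (u i) + algebraMap k K (v i) * θ) = w from
      funext fun i => (hw i).symm]
    exact hweval
  by_cases hf : f = 0
  · have h0 : MvPolynomial.eval u φ = 0 := by
      have he := lineRestrict_eval u v φ 0
      rw [← hf_def, hf] at he
      simpa using he.symm
    by_cases hu : u = 0
    · apply hsc θ v
      · intro h
        exact hθne 0 (by rw [h, map_zero])
      · intro i
        rw [hw i, hu]
        simp [mul_comm]
    · exact ⟨u, hu, h0⟩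
  · have hint : IsIntegral k θ := IsIntegral.of_finite k θ
    have hmd : (minpoly k θ).natDegree = 2 := by
      have h1 : (minpoly k θ).natDegree ≤ 2 := hK ▸ minpoly.natDegree_le θ
      have h2 : 2 ≤ (minpoly k θ).natDegree := by
        rw [minpoly.two_le_natDegree_iff hint]
        intro h
        exact hθrange h
      omega
    obtain ⟨q, hq⟩ : minpoly k θ ∣ f := minpoly.dvd k θ hfθ
    have hq0 : q ≠ 0 := by
      rintro rfl
      rw [mul_zero] at hq
      exact hf hq
    have hfd : f.natDegree ≤ 3 := lineRestrict_natDegree_le u v hφ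
    have hfdq : f.natDegree = 2 + q.natDegree := by
      rw [hq, Polynomial.natDegree_mul (minpoly.ne_zero hint) hq0, hmd]
    have hqd : q.natDegree ≤ 1 := by omega
    by_cases hq1 : q.coeff 1 = 0
    · have hqc : q = Polynomial.C (q.coeff 0) := by
        have h := Polynomial.eq_X_add_C_of_natDegree_le_one hqd
        rw [hq1] at h
        simpa using h
      have hfd2 : f.natDegree = 2 := by
        rw [hfdq, hqc, Polynomial.natDegree_C]
      have hv : MvPolynomial.eval v φ = 0 := by
        rw [← lineRestrict_coeff u v hφ, ← hf_def]
        exact Polynomial.coeff_eq_zero_of_natDegree_lt (by omega)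
      by_cases hv0 : v = 0
      · apply hsc 1 u one_ne_zero
        intro i
        rw [hw i, hv0]
        simp
      · exact ⟨v, hv0, hv⟩
    · set t₀ := -(q.coeff 0) / (q.coeff 1) with ht₀
      have hqt : q.eval t₀ = 0 := by
        conv_lhs => rw [Polynomial.eq_X_add_C_of_natDegree_le_one hqd]
        simp only [Polynomial.eval_add, Polynomial.eval_mul, Polynomial.eval_C,
          Polynomial.eval_X, ht₀]
        field_simp
        ring
      have hft : f.eval t₀ = 0 := by
        rw [hq, Polynomial.eval_mul, hqt, mul_zero]
      have heval : MvPolynomial.eval (fun i => u i + t₀ * v i) φ = 0 := by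
        rw [← lineRestrict_eval, ← hf_def]
        exact hft
      by_cases hz : (fun i => u i + t₀ * v i) = (0 : Fin (N+1) → k)
      · apply hsc (θ - algebraMap k K t₀) v
        · intro h
          rw [sub_eq_zero] at h
          exact hθne t₀ h
        · intro i
          have hui : u i = -(t₀ * v i) := by
            have := congrFun hz i
            simp only [Pi.zero_apply] at this
            linear_combination this
          rw [hw i, hui, map_neg, map_mul]
          ring
      · exact ⟨_, hz, heval⟩
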